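/- Let φ₁, φ₂ be holomorphic solutions of r(r²−34r+1)φ'' + (2r²−51r+1)φ' + (1/4)(r−10)φ = 0 on a domain avoiding the singular points. Then for any constants a, b, c, the function ψ = aφ₁² + bφ₁φ₂ + cφ₂² solves Apéry's equation r²(r²−34r+1)ψ''' + r(6r²−153r+3)ψ'' + (7r²−112r+1)ψ' + (r−5)ψ = 0. -/

import Mathlib

private noncomputable def aperyPsi1 (φ₁ φ₂ : ℂ → ℂ) (a b c : ℂ) : ℂ → ℂ := fun t =>
  2 * a * φ₁ t * deriv φ₁ t + b * (deriv φ₁ t * φ₂ t + φ₁ t * deriv φ₂ t)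
    + 2 * c * φ₂ t * deriv φ₂ t

private noncomputable def aperyPsi2 (φ₁ φ₂ : ℂ → ℂ) (a b c : ℂ) : ℂ → ℂ := fun t =>
  2 * a * (deriv φ₁ t ^ 2 + φ₁ t * deriv (deriv φ₁) t)
    + b * (deriv (deriv φ₁) t * φ₂ t + 2 * deriv φ₁ t * deriv φ₂ t
        + φ₁ t * deriv (deriv φ₂) t)
    + 2 * c * (deriv φ₂ t ^ 2 + φ₂ t * deriv (deriv φ₂) t)

/-- Apéry's third-order equation is the second symmetric power of the second-order
Fuchsian equation r(r²−34r+1)φ'' + (2r²−51r+1)φ' + (1/4)(r−10)φ = 0: any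
ψ = aφ₁² + bφ₁φ₂ + cφ₂² built from solutions φ₁, φ₂ solves Apéry's ODE. -/
theorem apery_symmetric_square (U : Set ℂ) (hU : IsOpen U) (φ₁ φ₂ : ℂ → ℂ)
    (hφ₁ : ∀ r ∈ U, AnalyticAt ℂ φ₁ r) (hφ₂ : ∀ r ∈ U, AnalyticAt ℂ φ₂ r)
    (hsing : ∀ r ∈ U, r * (r ^ 2 - 34 * r + 1) ≠ 0)
    (h1 : ∀ r ∈ U, r * (r ^ 2 - 34 * r + 1) * iteratedDeriv 2 φ₁ r
      + (2 * r ^ 2 - 51 * r + 1) * deriv φ₁ r + (1 / 4) * (r - 10) * φ₁ r = 0)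
    (h2 : ∀ r ∈ U, r * (r ^ 2 - 34 * r + 1) * iteratedDeriv 2 φ₂ r
      + (2 * r ^ 2 - 51 * r + 1) * deriv φ₂ r + (1 / 4) * (r - 10) * φ₂ r = 0)
    (a b c : ℂ) :
    ∀ r ∈ U,
      r ^ 2 * (r ^ 2 - 34 * r + 1) *
          iteratedDeriv 3 (fun t => a * (φ₁ t) ^ 2 + b * φ₁ t * φ₂ t + c * (φ₂ t) ^ 2) r
        + r * (6 * r ^ 2 - 153 * r + 3) *
            iteratedDeriv 2 (fun t => a * (φ₁ t) ^ 2 + b * φ₁ t * φ₂ t + c * (φ₂ t) ^ 2) r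
        + (7 * r ^ 2 - 112 * r + 1) *
            deriv (fun t => a * (φ₁ t) ^ 2 + b * φ₁ t * φ₂ t + c * (φ₂ t) ^ 2) r
        + (r - 5) * (a * (φ₁ r) ^ 2 + b * φ₁ r * φ₂ r + c * (φ₂ r) ^ 2) = 0 := by
  intro r hr
  have hA0 : AnalyticOnNhd ℂ φ₁ U := hφ₁
  have hB0 : AnalyticOnNhd ℂ φ₂ U := hφ₂
  have hA1 : AnalyticOnNhd ℂ (deriv φ₁) U := hA0.deriv
  have hB1 : AnalyticOnNhd ℂ (deriv φ₂) U := hB0.deriv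
  have hA2 : AnalyticOnNhd ℂ (deriv (deriv φ₁)) U := hA1.deriv
  have hB2 : AnalyticOnNhd ℂ (deriv (deriv φ₂)) U := hB1.deriv
  set ψ : ℂ → ℂ := fun t => a * (φ₁ t) ^ 2 + b * φ₁ t * φ₂ t + c * (φ₂ t) ^ 2 with hψdef
  -- first derivative of ψ on U
  have hψ1 : ∀ t ∈ U, HasDerivAt ψ (aperyPsi1 φ₁ φ₂ a b c t) t := by
    intro t ht
    have d1 := (hA0 t ht).differentiableAt.hasDerivAt
    have d2 := (hB0 t ht).differentiableAt.hasDerivAt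
    have H := (((d1.pow 2).const_mul a).add ((d1.const_mul b).mul d2)).add
      ((d2.pow 2).const_mul c)
    convert H using 1
    rfl; rfl; rfl
    simp [aperyPsi1]; ring
  have e1 : Set.EqOn (deriv ψ) (aperyPsi1 φ₁ φ₂ a b c) U := fun t ht => (hψ1 t ht).deriv
  -- second derivative of ψ on U
  have hψ2 : ∀ t ∈ U, HasDerivAt (aperyPsi1 φ₁ φ₂ a b c) (aperyPsi2 φ₁ φ₂ a b c t) t := by
    intro t ht
    have d1 := (hA0 t ht).differentiableAt.hasDerivAt
    have d2 := (hB0 t ht).differentiableAt.hasDerivAt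
    have dd1 := (hA1 t ht).differentiableAt.hasDerivAt
    have dd2 := (hB1 t ht).differentiableAt.hasDerivAt
    have H := (((d1.const_mul (2 * a)).mul dd1).add
        (((dd1.mul d2).add (d1.mul dd2)).const_mul b)).add
      ((d2.const_mul (2 * c)).mul dd2)
    convert H using 1
    rfl; rfl; rfl
    simp [aperyPsi1, aperyPsi2]; ring
  have e2 : Set.EqOn (deriv (deriv ψ)) (aperyPsi2 φ₁ φ₂ a b c) U := by
    intro t ht
    rw [((e1.eventuallyEq_of_mem (hU.mem_nhds ht))).deriv_eq]
    exact (hψ2 t ht).deriv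
  -- third derivative at r
  have d1 := (hA0 r hr).differentiableAt.hasDerivAt
  have d2 := (hB0 r hr).differentiableAt.hasDerivAt
  have dd1 := (hA1 r hr).differentiableAt.hasDerivAt
  have dd2 := (hB1 r hr).differentiableAt.hasDerivAt
  have ddd1 := (hA2 r hr).differentiableAt.hasDerivAt
  have ddd2 := (hB2 r hr).differentiableAt.hasDerivAt
  have hψ3 : HasDerivAt (aperyPsi2 φ₁ φ₂ a b c)
      (2 * a * (3 * deriv φ₁ r * deriv (deriv φ₁) r + φ₁ r * deriv (deriv (deriv φ₁)) r)
        + b * (deriv (deriv (deriv φ₁)) r * φ₂ r + 3 * deriv (deriv φ₁) r * deriv φ₂ r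
            + 3 * deriv φ₁ r * deriv (deriv φ₂) r + φ₁ r * deriv (deriv (deriv φ₂)) r)
        + 2 * c * (3 * deriv φ₂ r * deriv (deriv φ₂) r
            + φ₂ r * deriv (deriv (deriv φ₂)) r)) r := by
    have H := ((((dd1.pow 2).add (d1.mul ddd1)).const_mul (2 * a)).add
        ((((ddd1.mul d2).add ((dd1.const_mul 2).mul dd2)).add (d1.mul ddd2)).const_mul b)).add
      (((dd2.pow 2).add (d2.mul ddd2)).const_mul (2 * c))
    convert H using 1
    rfl; rfl; rfl
    simp [aperyPsi2]; ring
  -- rewrite iterated derivatives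
  have it2 : ∀ f : ℂ → ℂ, iteratedDeriv 2 f = deriv (deriv f) := by
    intro f
    rw [show (2 : ℕ) = 1 + 1 from rfl, iteratedDeriv_succ, iteratedDeriv_one]
  have it3 : iteratedDeriv 3 ψ = deriv (deriv (deriv ψ)) := by
    rw [show (3 : ℕ) = 2 + 1 from rfl, iteratedDeriv_succ, it2]
  have hI1 : deriv ψ r = aperyPsi1 φ₁ φ₂ a b c r := e1 hr
  have hI2 : iteratedDeriv 2 ψ r = aperyPsi2 φ₁ φ₂ a b c r := by rw [it2]; exact e2 hr
  have hI3 : iteratedDeriv 3 ψ r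
      = 2 * a * (3 * deriv φ₁ r * deriv (deriv φ₁) r + φ₁ r * deriv (deriv (deriv φ₁)) r)
        + b * (deriv (deriv (deriv φ₁)) r * φ₂ r + 3 * deriv (deriv φ₁) r * deriv φ₂ r
            + 3 * deriv φ₁ r * deriv (deriv φ₂) r + φ₁ r * deriv (deriv (deriv φ₂)) r)
        + 2 * c * (3 * deriv φ₂ r * deriv (deriv φ₂) r
            + φ₂ r * deriv (deriv (deriv φ₂)) r) := by
    rw [it3, (e2.eventuallyEq_of_mem (hU.mem_nhds hr)).deriv_eq]
    exact hψ3.deriv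
  -- second-order equations at r
  have E1 : r * (r ^ 2 - 34 * r + 1) * deriv (deriv φ₁) r
      + (2 * r ^ 2 - 51 * r + 1) * deriv φ₁ r + (1 / 4) * (r - 10) * φ₁ r = 0 := by
    have := h1 r hr; rwa [it2 φ₁] at this
  have E2 : r * (r ^ 2 - 34 * r + 1) * deriv (deriv φ₂) r
      + (2 * r ^ 2 - 51 * r + 1) * deriv φ₂ r + (1 / 4) * (r - 10) * φ₂ r = 0 := by
    have := h2 r hr; rwa [it2 φ₂] at this
  -- differentiated second-order equations at r
  have hder : ∀ (φ : ℂ → ℂ), AnalyticOnNhd ℂ φ U → AnalyticOnNhd ℂ (deriv φ) U →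
      AnalyticOnNhd ℂ (deriv (deriv φ)) U →
      (∀ t ∈ U, t * (t ^ 2 - 34 * t + 1) * iteratedDeriv 2 φ t
        + (2 * t ^ 2 - 51 * t + 1) * deriv φ t + (1 / 4) * (t - 10) * φ t = 0) →
      (3 * r ^ 2 - 68 * r + 1) * deriv (deriv φ) r
        + r * (r ^ 2 - 34 * r + 1) * deriv (deriv (deriv φ)) r
        + (4 * r - 51) * deriv φ r + (2 * r ^ 2 - 51 * r + 1) * deriv (deriv φ) r
        + ((1 / 4) * φ r + (1 / 4) * (r - 10) * deriv φ r) = 0 := by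
    intro φ h0 hd1 hd2 hODE
    set g : ℂ → ℂ := fun t => t * (t ^ 2 - 34 * t + 1) * deriv (deriv φ) t
      + (2 * t ^ 2 - 51 * t + 1) * deriv φ t + 1 / 4 * (t - 10) * φ t with hgdef
    have hg0 : Set.EqOn g (fun _ => 0) U := by
      intro t ht
      have := hODE t ht; rw [it2 φ] at this
      simpa [hgdef] using this
    have hgd0 : deriv g r = 0 := by
      rw [(hg0.eventuallyEq_of_mem (hU.mem_nhds hr)).deriv_eq]
      simp
    have e1 := (h0 r hr).differentiableAt.hasDerivAt
    have e2 := (hd1 r hr).differentiableAt.hasDerivAt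
    have e3 := (hd2 r hr).differentiableAt.hasDerivAt
    have hid := hasDerivAt_id r
    have hsq := hasDerivAt_pow 2 r
    have hp : HasDerivAt (fun t : ℂ => t * (t ^ 2 - 34 * t + 1)) (3 * r ^ 2 - 68 * r + 1) r := by
      have H := hid.mul ((hsq.sub (hid.const_mul 34)).add_const 1)
      convert H using 1
      rfl; rfl; rfl
      norm_num
      try ring
    have hq : HasDerivAt (fun t : ℂ => 2 * t ^ 2 - 51 * t + 1) (4 * r - 51) r := by
      have H := ((hsq.const_mul 2).sub (hid.const_mul 51)).add_const 1
      convert H using 1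
      rfl; rfl; rfl
      norm_num
      try ring
    have hs : HasDerivAt (fun t : ℂ => 1 / 4 * (t - 10)) ((1 : ℂ) / 4) r := by
      have H := (hid.sub_const 10).const_mul (1 / 4 : ℂ)
      convert H using 1
      rfl; rfl; rfl
      norm_num
      try ring
    have hgd : HasDerivAt g
        ((3 * r ^ 2 - 68 * r + 1) * deriv (deriv φ) r
          + r * (r ^ 2 - 34 * r + 1) * deriv (deriv (deriv φ)) r
          + (4 * r - 51) * deriv φ r + (2 * r ^ 2 - 51 * r + 1) * deriv (deriv φ) r
          + ((1 / 4) * φ r + (1 / 4) * (r - 10) * deriv φ r)) r := by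
      have H := ((hp.mul e3).add (hq.mul e2)).add (hs.mul e1)
      convert H using 1
      rfl; rfl; rfl
      ring
    rw [← hgd.deriv]; exact hgd0
  have E1p := hder φ₁ hA0 hA1 hA2 h1
  have E2p := hder φ₂ hB0 hB1 hB2 h2
  rw [hI1, hI2, hI3]
  simp only [aperyPsi1, aperyPsi2]
  linear_combination
    (b * φ₂ r + 2 * a * φ₁ r + 3 * r * b * deriv φ₂ r + 6 * r * a * deriv φ₁ r) * E1
    + (2 * c * φ₂ r + b * φ₁ r + 6 * r * c * deriv φ₂ r + 3 * r * b * deriv φ₁ r) * E2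
    + (r * b * φ₂ r + 2 * r * a * φ₁ r) * E1p
    + (2 * r * c * φ₂ r + r * b * φ₁ r) * E2p
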